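/- arXiv:1402.3617 — 2 statements merged into one kernel-verified Lean document; each statement's English description precedes it below -/
import Mathlib

section
/- Fix γ > 0, λ > 0, and for y ∈ ℤ let S_y act on functions f : ℝ^ℤ → ℝ by (S_y f)(ω) = γ(f(ω^y) − f(ω)) + λ(f(ω^{y,y+1}) − f(ω)). Then for every x ∈ ℤ, every integer k ≥ 1, and every ω ∈ ℝ^ℤ: ω_x ω_{x+k} = S_x(h₀)(ω) + Σ_{ℓ=1}^{k−1} S_{x+ℓ}(h_ℓ)(ω), where h₀(ω) = −ω_x ω_{x+1}/(2γ) and, for 1 ≤ ℓ ≤ k−1, h_ℓ(ω) = −ω_x ω_{x+ℓ+1}/λ. In particular every monomial ω_x ω_{x+k} lies in the range of the symmetric part of the generator. -/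
noncomputable section

/-- Flip of the coordinate at site `y`: `ω_y ↦ −ω_y`. -/
def flipAt (y : ℤ) (ω : ℤ → ℝ) : ℤ → ℝ := Function.update ω y (-(ω y))

/-- Exchange of the coordinates at sites `y` and `y+1`. -/
def exchAt (y : ℤ) (ω : ℤ → ℝ) : ℤ → ℝ :=
  fun z => if z = y then ω (y + 1) else if z = y + 1 then ω y else ω z

/-- The one-site symmetric operator
`(S_y f)(ω) = γ(f(ω^y) − f(ω)) + λ(f(ω^{y,y+1}) − f(ω))`. -/
def Sy (gam lam : ℝ) (y : ℤ) (f : (ℤ → ℝ) → ℝ) (ω : ℤ → ℝ) : ℝ :=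
  gam * (f (flipAt y ω) - f ω) + lam * (f (exchAt y ω) - f ω)

lemma Sy_h0 (gam lam : ℝ) (hgam : gam ≠ 0) (x : ℤ) (ω : ℤ → ℝ) :
    Sy gam lam x (fun ω' => -(ω' x * ω' (x + 1)) / (2 * gam)) ω = ω x * ω (x + 1) := by
  have hx : x + 1 ≠ x := by omega
  simp only [Sy, flipAt, exchAt, Function.update_apply, if_pos rfl, if_neg hx, ↓reduceIte]
  field_simp
  ring

lemma Sy_hl (gam lam : ℝ) (hlam : lam ≠ 0) (x l : ℤ) (hl : 1 ≤ l) (ω : ℤ → ℝ) :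
    Sy gam lam (x + l) (fun ω' => -(ω' x * ω' (x + l + 1)) / lam) ω
      = ω x * ω (x + l + 1) - ω x * ω (x + l) := by
  have h1 : x ≠ x + l := by omega
  have h2 : x + l + 1 ≠ x + l := by omega
  have h3 : x ≠ x + l + 1 := by omega
  simp only [Sy, flipAt, exchAt, Function.update_apply, if_neg h1, if_neg h2, if_neg h3,
    if_pos rfl, ↓reduceIte]
  field_simp
  ring

/-- for every `x ∈ ℤ`, every integer `k ≥ 1` and every `ω`,
`ω_x ω_{x+k} = S_x(h₀)(ω) + Σ_{ℓ=1}^{k−1} S_{x+ℓ}(h_ℓ)(ω)`, where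
`h₀(ω) = −ω_x ω_{x+1}/(2γ)` and `h_ℓ(ω) = −ω_x ω_{x+ℓ+1}/λ` for `1 ≤ ℓ ≤ k−1`.
In particular every monomial `ω_x ω_{x+k}` lies in the range of the symmetric part
of the generator. -/
theorem stmt1 (gam lam : ℝ) (hgam : 0 < gam) (hlam : 0 < lam)
    (x : ℤ) (k : ℕ) (hk : 1 ≤ k) (ω : ℤ → ℝ) :
    ω x * ω (x + k) =
      Sy gam lam x (fun ω' => -(ω' x * ω' (x + 1)) / (2 * gam)) ω
        + ∑ l ∈ Finset.Ico 1 k,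
            Sy gam lam (x + l) (fun ω' => -(ω' x * ω' (x + l + 1)) / lam) ω := by
  induction k, hk using Nat.le_induction with
  | base =>
    simp [Sy_h0 gam lam hgam.ne' x ω]
  | succ k hk ih =>
    rw [Finset.sum_Ico_succ_top hk, ← add_assoc, ← ih,
      Sy_hl gam lam hlam.ne' x k (by exact_mod_cast hk) ω]
    push_cast
    ring

end
end

section
/- Let N ≥ 1, β > 0, m : ℤ/Nℤ → (0,∞), and let μ_β^N be the product measure on ℝ^{ℤ/Nℤ} whose coordinates are i.i.d. centered Gaussian with variance β⁻¹. Define, for differentiable F : ℝ^{ℤ/Nℤ} → ℝ, (A^m F)(ω) = Σ_{x∈ℤ/Nℤ} (ω_{x+1}/√(m_x m_{x+1}) − ω_{x−1}/√(m_{x−1} m_x)) ∂F/∂ω_x. Then A^m is antisymmetric in L²(μ_β^N): for all polynomial functions f, g : ℝ^{ℤ/Nℤ} → ℝ, ∫ (A^m f)·g dμ_β^N = − ∫ f·(A^m g) dμ_β^N. -/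
open MeasureTheory ProbabilityTheory
open Real Filter Polynomial NNReal ENNReal

noncomputable section

set_option linter.unusedSectionVars false
set_option linter.unusedTactic false


lemma integrable_pow_gauss {b : ℝ} (hb : 0 < b) (k : ℕ) :
    Integrable (fun t : ℝ => t ^ k * Real.exp (-b * t ^ 2)) := by
  have h := integrable_rpow_mul_exp_neg_mul_sq hb (s := (k : ℝ))
    (lt_of_lt_of_le (by norm_num) (Nat.cast_nonneg k))
  simpa [Real.rpow_natCast] using h

lemma pdf_eq (v : ℝ≥0) (t : ℝ) :
    gaussianPDFReal 0 v t
      = (Real.sqrt (2 * Real.pi * v))⁻¹ * Real.exp (-(2 * (v : ℝ))⁻¹ * t ^ 2) := by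
  unfold gaussianPDFReal
  rw [sub_zero]
  congr 1
  rw [div_eq_mul_inv]
  ring

lemma integral_gaussianReal_eq (v : ℝ≥0) (hv : v ≠ 0) (g : ℝ → ℝ) :
    ∫ t, g t ∂(gaussianReal 0 v) = ∫ t, gaussianPDFReal 0 v t * g t := by
  rw [gaussianReal_of_var_ne_zero 0 hv]
  rw [show gaussianPDF 0 v = fun x => ((Real.toNNReal (gaussianPDFReal 0 v x) : ℝ≥0) : ℝ≥0∞)
    from rfl]
  rw [integral_withDensity_eq_integral_smul (measurable_gaussianPDFReal 0 v).real_toNNReal g]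
  congr 1
  funext t
  rw [NNReal.smul_def, Real.coe_toNNReal _ (gaussianPDFReal_nonneg 0 v t), smul_eq_mul]

lemma integrable_gaussianReal_iff (v : ℝ≥0) (hv : v ≠ 0) (g : ℝ → ℝ) :
    Integrable g (gaussianReal 0 v)
      ↔ Integrable (fun t => gaussianPDFReal 0 v t * g t) volume := by
  rw [gaussianReal_of_var_ne_zero 0 hv]
  rw [show gaussianPDF 0 v = fun x => ((Real.toNNReal (gaussianPDFReal 0 v x) : ℝ≥0) : ℝ≥0∞)
    from rfl]
  rw [integrable_withDensity_iff_integrable_smul (measurable_gaussianPDFReal 0 v).real_toNNReal]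
  constructor <;> intro h <;> refine h.congr (Filter.Eventually.of_forall fun t => ?_) <;>
    simp [NNReal.smul_def, Real.coe_toNNReal _ (gaussianPDFReal_nonneg 0 v t)]

lemma integrable_pdf_mul_poly (v : ℝ≥0) (hv : v ≠ 0) (q : Polynomial ℝ) :
    Integrable (fun t => gaussianPDFReal 0 v t * Polynomial.eval t q) volume := by
  have hvpos : 0 < (v : ℝ) := by exact_mod_cast hv.bot_lt
  have hb : 0 < (2 * (v : ℝ))⁻¹ := by positivity
  have heq : (fun t => gaussianPDFReal 0 v t * Polynomial.eval t q)
      = fun t => ∑ k ∈ Finset.range (q.natDegree + 1),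
          (q.coeff k * (Real.sqrt (2 * Real.pi * v))⁻¹) *
            (t ^ k * Real.exp (-(2 * (v : ℝ))⁻¹ * t ^ 2)) := by
    funext t
    rw [pdf_eq, Polynomial.eval_eq_sum_range, Finset.mul_sum]
    exact Finset.sum_congr rfl fun k _ => by ring
  rw [heq]
  exact integrable_finset_sum _ fun k _ => (integrable_pow_gauss hb k).const_mul _

lemma integrable_poly_gauss (v : ℝ≥0) (hv : v ≠ 0) (q : Polynomial ℝ) :
    Integrable (fun t => Polynomial.eval t q) (gaussianReal 0 v) :=
  (integrable_gaussianReal_iff v hv _).mpr (integrable_pdf_mul_poly v hv q)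

lemma hasDerivAt_gaussianPDFReal (v : ℝ≥0) (hvpos : 0 < (v : ℝ)) (t : ℝ) :
    HasDerivAt (gaussianPDFReal 0 v) (-(t / v) * gaussianPDFReal 0 v t) t := by
  have h1 : HasDerivAt (fun x : ℝ => x - 0) 1 t := (hasDerivAt_id t).sub_const 0
  have h2 := h1.pow 2
  have h3 := (h2.neg.div_const (2 * (v : ℝ))).exp.const_mul
    ((Real.sqrt (2 * Real.pi * v))⁻¹)
  have harg : ∀ x : ℝ, gaussianPDFReal 0 v x
      = (Real.sqrt (2 * Real.pi * v))⁻¹ * Real.exp (-(x - 0) ^ 2 / (2 * v)) := fun x => rfl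
  rw [show gaussianPDFReal 0 v
      = fun x => (Real.sqrt (2 * Real.pi * v))⁻¹ * Real.exp (-(x - 0) ^ 2 / (2 * v))
    from funext harg]
  refine h3.congr_deriv ?_
  simp only [Pi.pow_apply, Pi.neg_apply, sub_zero]
  push_cast
  field_simp

lemma gauss_ibp (v : ℝ≥0) (hv : v ≠ 0) (q : Polynomial ℝ) :
    ∫ t, Polynomial.eval t (derivative q) ∂(gaussianReal 0 v)
      = (v : ℝ)⁻¹ * ∫ t, t * Polynomial.eval t q ∂(gaussianReal 0 v) := by
  have hvpos : 0 < (v : ℝ) := by exact_mod_cast hv.bot_lt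
  set r : Polynomial ℝ := derivative q - Polynomial.C (v : ℝ)⁻¹ * Polynomial.X * q with hr
  have hkey : ∫ t, gaussianPDFReal 0 v t * Polynomial.eval t r = 0 := by
    have hderiv : ∀ t : ℝ, HasDerivAt (fun t => Polynomial.eval t q * gaussianPDFReal 0 v t)
        (gaussianPDFReal 0 v t * Polynomial.eval t r) t := by
      intro t
      have h1 := (q.hasDerivAt t).mul (hasDerivAt_gaussianPDFReal v hvpos t)
      refine h1.congr_deriv ?_
      simp only [hr, Polynomial.eval_sub, Polynomial.eval_mul, Polynomial.eval_C,
        Polynomial.eval_X]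
      field_simp
      ring
    have hf : Integrable (fun t => Polynomial.eval t q * gaussianPDFReal 0 v t) volume := by
      have := integrable_pdf_mul_poly v hv q
      exact this.congr (Filter.Eventually.of_forall fun t => mul_comm _ _)
    exact integral_eq_zero_of_hasDerivAt_of_integrable hderiv
      (integrable_pdf_mul_poly v hv r) hf
  rw [integral_gaussianReal_eq v hv, integral_gaussianReal_eq v hv]
  have hsplit : (fun t => gaussianPDFReal 0 v t * Polynomial.eval t r)
      = fun t => gaussianPDFReal 0 v t * Polynomial.eval t (derivative q)
          - (v : ℝ)⁻¹ * (gaussianPDFReal 0 v t * (t * Polynomial.eval t q)) := by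
    funext t
    simp only [hr, Polynomial.eval_sub, Polynomial.eval_mul, Polynomial.eval_C,
      Polynomial.eval_X]
    ring
  rw [hsplit] at hkey
  have hint1 := integrable_pdf_mul_poly v hv (derivative q)
  have hint2 : Integrable (fun t => gaussianPDFReal 0 v t * (t * Polynomial.eval t q)) volume := by
    have := integrable_pdf_mul_poly v hv (Polynomial.X * q)
    simpa using this
  rw [integral_sub hint1 (hint2.const_mul _), integral_const_mul, sub_eq_zero] at hkey
  exact hkey


open MvPolynomial

variable {N : ℕ} [NeZero N]

lemma pi_integral (v : ℝ≥0) (f : ZMod N → ℝ → ℝ) :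
    ∫ ω : ZMod N → ℝ, ∏ i, f i (ω i) ∂(Measure.pi fun _ => gaussianReal 0 v)
      = ∏ i, ∫ t, f i t ∂(gaussianReal 0 v) := by
  letI : MeasureSpace ℝ := ⟨gaussianReal 0 v⟩
  haveI : SigmaFinite (volume : Measure ℝ) := by
    show SigmaFinite (gaussianReal 0 v); infer_instance
  exact MeasureTheory.integral_fintype_prod_eq_prod f

lemma pi_integrable (v : ℝ≥0) (f : ZMod N → ℝ → ℝ)
    (hf : ∀ i, Integrable (f i) (gaussianReal 0 v)) :
    Integrable (fun ω : ZMod N → ℝ => ∏ i, f i (ω i))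
      (Measure.pi fun _ => gaussianReal 0 v) := by
  letI : MeasureSpace ℝ := ⟨gaussianReal 0 v⟩
  haveI : SigmaFinite (volume : Measure ℝ) := by
    show SigmaFinite (gaussianReal 0 v); infer_instance
  exact MeasureTheory.Integrable.fintype_prod hf

lemma integrable_pow_gaussianReal {v : ℝ≥0} (hv : v ≠ 0) (k : ℕ) :
    Integrable (fun t : ℝ => t ^ k) (gaussianReal 0 v) := by
  have h := integrable_poly_gauss v hv (Polynomial.X ^ k)
  simpa only [Polynomial.eval_pow, Polynomial.eval_X] using h

lemma integrable_mveval {v : ℝ≥0} (hv : v ≠ 0) (p : MvPolynomial (ZMod N) ℝ) :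
    Integrable (fun ω => MvPolynomial.eval ω p) (Measure.pi fun _ => gaussianReal 0 v) := by
  have h : (fun ω : ZMod N → ℝ => MvPolynomial.eval ω p)
      = fun ω => ∑ d ∈ p.support, p.coeff d * ∏ i, ω i ^ d i := by
    funext ω; rw [MvPolynomial.eval_eq']
  rw [h]
  exact integrable_finset_sum _ fun d _ =>
    (pi_integrable v (fun i t => t ^ d i) fun i => integrable_pow_gaussianReal hv _).const_mul _

lemma key1d {v : ℝ≥0} (hv : v ≠ 0) (k : ℕ) :
    (k : ℝ) * ∫ t, t ^ (k - 1) ∂(gaussianReal 0 v)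
      = (v : ℝ)⁻¹ * ∫ t, t ^ (k + 1) ∂(gaussianReal 0 v) := by
  have h := gauss_ibp v hv (Polynomial.X ^ k)
  simp only [Polynomial.derivative_X_pow, Polynomial.eval_mul, Polynomial.eval_C,
    Polynomial.eval_pow, Polynomial.eval_X] at h
  rw [integral_const_mul] at h
  rw [h]
  congr 1
  congr 1
  funext t
  rw [pow_succ, mul_comm]

lemma eval_monomial'' (ω : ZMod N → ℝ) (e : ZMod N →₀ ℕ) (c : ℝ) :
    MvPolynomial.eval ω (MvPolynomial.monomial e c) = c * ∏ i, ω i ^ e i := by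
  rw [MvPolynomial.eval_monomial, Finsupp.prod_fintype]
  intro i; exact pow_zero _

lemma mv_ibp {v : ℝ≥0} (hv : v ≠ 0) (p : MvPolynomial (ZMod N) ℝ) (x : ZMod N) :
    ∫ ω, MvPolynomial.eval ω (MvPolynomial.pderiv x p) ∂(Measure.pi fun _ => gaussianReal 0 v)
      = (v : ℝ)⁻¹ * ∫ ω, MvPolynomial.eval ω (MvPolynomial.X x * p) ∂(Measure.pi fun _ => gaussianReal 0 v) := by
  induction p using MvPolynomial.induction_on' with
  | add p q hp hq =>
    rw [map_add, mul_add]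
    have e1 : (fun ω : ZMod N → ℝ => MvPolynomial.eval ω (MvPolynomial.pderiv x p + pderiv x q))
        = fun ω => MvPolynomial.eval ω (MvPolynomial.pderiv x p) + MvPolynomial.eval ω (MvPolynomial.pderiv x q) := by funext ω; rw [map_add]
    have e2 : (fun ω : ZMod N → ℝ => MvPolynomial.eval ω (MvPolynomial.X x * p + X x * q))
        = fun ω => MvPolynomial.eval ω (MvPolynomial.X x * p) + MvPolynomial.eval ω (MvPolynomial.X x * q) := by funext ω; rw [map_add]
    rw [e1, e2, integral_add (integrable_mveval hv _) (integrable_mveval hv _),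
      integral_add (integrable_mveval hv _) (integrable_mveval hv _), hp, hq, mul_add]
  | monomial d c =>
    have hXmon : (MvPolynomial.X x : MvPolynomial (ZMod N) ℝ)
        = MvPolynomial.monomial (Finsupp.single x 1) 1 := rfl
    rw [MvPolynomial.pderiv_monomial, hXmon, MvPolynomial.monomial_mul]
    have e1 : (fun ω : ZMod N → ℝ => MvPolynomial.eval ω (MvPolynomial.monomial (d - Finsupp.single x 1) (c * d x)))
        = fun ω => (c * d x) * ∏ i, ω i ^ ((d - Finsupp.single x 1 : ZMod N →₀ ℕ) i) := by
      funext ω; rw [eval_monomial'']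
    have e2 : (fun ω : ZMod N → ℝ => MvPolynomial.eval ω (MvPolynomial.monomial (Finsupp.single x 1 + d) (1 * c)))
        = fun ω => (1 * c) * ∏ i, ω i ^ ((Finsupp.single x 1 + d : ZMod N →₀ ℕ) i) := by
      funext ω; rw [eval_monomial'']
    rw [e1, e2, integral_const_mul, integral_const_mul,
      pi_integral v (fun i t => t ^ ((d - Finsupp.single x 1 : ZMod N →₀ ℕ) i)),
      pi_integral v (fun i t => t ^ ((Finsupp.single x 1 + d : ZMod N →₀ ℕ) i))]
    rw [← Finset.mul_prod_erase Finset.univ _ (Finset.mem_univ x),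
      ← Finset.mul_prod_erase Finset.univ
        (fun i => ∫ t, t ^ ((Finsupp.single x 1 + d : ZMod N →₀ ℕ) i) ∂(gaussianReal 0 v)) (Finset.mem_univ x)]
    have hP : ∏ i ∈ Finset.univ.erase x,
          (∫ t, t ^ ((d - Finsupp.single x 1 : ZMod N →₀ ℕ) i) ∂(gaussianReal 0 v))
        = ∏ i ∈ Finset.univ.erase x,
          (∫ t, t ^ ((Finsupp.single x 1 + d : ZMod N →₀ ℕ) i) ∂(gaussianReal 0 v)) := by
      refine Finset.prod_congr rfl fun i hi => ?_
      have hix : i ≠ x := Finset.ne_of_mem_erase hi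
      rw [Finsupp.tsub_apply, Finsupp.add_apply, Finsupp.single_eq_of_ne hix]
      simp
    rw [hP]
    have hx1 : (d - Finsupp.single x 1 : ZMod N →₀ ℕ) x = d x - 1 := by
      rw [Finsupp.tsub_apply, Finsupp.single_eq_same]
    have hx2 : (Finsupp.single x 1 + d : ZMod N →₀ ℕ) x = d x + 1 := by
      rw [Finsupp.add_apply, Finsupp.single_eq_same, add_comm]
    rw [hx1, hx2]
    have hk := key1d hv (d x)
    set P := ∏ i ∈ Finset.univ.erase x,
      (∫ t, t ^ ((Finsupp.single x 1 + d : ZMod N →₀ ℕ) i) ∂(gaussianReal 0 v)) with hPdef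
    push_cast
    linear_combination c * P * hk

/-- The antisymmetric (Hamiltonian) part `A^m` of the generator of the disordered
harmonic chain on the discrete torus `ℤ/Nℤ`:
`(A^m F)(ω) = Σ_{x} (ω_{x+1}/√(m_x m_{x+1}) − ω_{x−1}/√(m_{x−1} m_x)) ∂F/∂ω_x`. -/
def AgenTorus (N : ℕ) [NeZero N] (m : ZMod N → ℝ) (F : (ZMod N → ℝ) → ℝ)
    (ω : ZMod N → ℝ) : ℝ :=
  ∑ x : ZMod N,
    (ω (x + 1) / Real.sqrt (m x * m (x + 1)) - ω (x - 1) / Real.sqrt (m (x - 1) * m x)) *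
      deriv (fun t => F (Function.update ω x t)) (ω x)

/-- The product Gaussian measure `μ_β^N` on `ℝ^{ℤ/Nℤ}` whose coordinates are
i.i.d. centered Gaussians with variance `β⁻¹`. -/
def gaussTorus (N : ℕ) [NeZero N] (β : ℝ) : Measure (ZMod N → ℝ) :=
  Measure.pi fun _ : ZMod N => gaussianReal 0 (Real.toNNReal β⁻¹)


variable {N : ℕ} [NeZero N]




lemma hasDerivAt_mveval (p : MvPolynomial (ZMod N) ℝ) (ω : ZMod N → ℝ) (x : ZMod N) (y : ℝ) :
    HasDerivAt (fun t => MvPolynomial.eval (Function.update ω x t) p)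
      (MvPolynomial.eval (Function.update ω x y) (MvPolynomial.pderiv x p)) y := by
  induction p using MvPolynomial.induction_on with
  | C a =>
    simp only [MvPolynomial.eval_C, MvPolynomial.pderiv_C, map_zero]
    exact hasDerivAt_const y a
  | add p q hp hq =>
    simp only [map_add]
    exact hp.add hq
  | mul_X p i hp =>
    rcases eq_or_ne i x with rfl | hix
    · simp only [map_mul, MvPolynomial.eval_X, Function.update_self,
        MvPolynomial.pderiv_mul, MvPolynomial.pderiv_X_self, mul_one, map_add]
      exact (hp.mul (hasDerivAt_id' y)).congr_deriv (by ring)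
    · simp only [map_mul, MvPolynomial.eval_X, Function.update_of_ne hix,
        MvPolynomial.pderiv_mul, MvPolynomial.pderiv_X_of_ne hix, mul_zero, map_add,
        add_zero, map_zero]
      exact hp.mul_const (ω i)

/-- The polynomial implementing `A^m` on polynomials. -/
def cpoly (N : ℕ) [NeZero N] (m : ZMod N → ℝ) (x : ZMod N) : MvPolynomial (ZMod N) ℝ :=
  MvPolynomial.C (Real.sqrt (m x * m (x + 1)))⁻¹ * MvPolynomial.X (x + 1)
    - MvPolynomial.C (Real.sqrt (m (x - 1) * m x))⁻¹ * MvPolynomial.X (x - 1)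

def Apoly (N : ℕ) [NeZero N] (m : ZMod N → ℝ) (p : MvPolynomial (ZMod N) ℝ) :
    MvPolynomial (ZMod N) ℝ :=
  ∑ x : ZMod N, cpoly N m x * MvPolynomial.pderiv x p

lemma Agen_eq (m : ZMod N → ℝ) (p : MvPolynomial (ZMod N) ℝ) (ω : ZMod N → ℝ) :
    AgenTorus N m (fun w => MvPolynomial.eval w p) ω = MvPolynomial.eval ω (Apoly N m p) := by
  unfold AgenTorus Apoly cpoly
  rw [map_sum]
  refine Finset.sum_congr rfl fun x _ => ?_
  have hd : deriv (fun t => MvPolynomial.eval (Function.update ω x t) p) (ω x)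
      = MvPolynomial.eval ω (MvPolynomial.pderiv x p) := by
    have h := (hasDerivAt_mveval p ω x (ω x)).deriv
    rwa [Function.update_eq_self] at h
  rw [hd, map_mul, map_sub, map_mul, map_mul, MvPolynomial.eval_C, MvPolynomial.eval_C,
    MvPolynomial.eval_X, MvPolynomial.eval_X]
  ring

/-- `A^m` is antisymmetric in `L²(μ_β^N)`: for all polynomial
functions `f, g` on `ℝ^{ℤ/Nℤ}`, `∫ (A^m f)·g dμ_β^N = − ∫ f·(A^m g) dμ_β^N`. -/
theorem stmt3 (N : ℕ) [NeZero N] (β : ℝ) (hβ : 0 < β)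
    (m : ZMod N → ℝ) (hm : ∀ x, 0 < m x)
    (f g : MvPolynomial (ZMod N) ℝ) :
    ∫ ω, AgenTorus N m (fun w => MvPolynomial.eval w f) ω * MvPolynomial.eval ω g
        ∂(gaussTorus N β)
      = - ∫ ω, MvPolynomial.eval ω f * AgenTorus N m (fun w => MvPolynomial.eval w g) ω
          ∂(gaussTorus N β) := by
  set v : ℝ≥0 := Real.toNNReal β⁻¹ with hvdef
  have hv : v ≠ 0 := (Real.toNNReal_pos.mpr (inv_pos.mpr hβ)).ne'
  set μ : Measure (ZMod N → ℝ) := Measure.pi fun _ : ZMod N => gaussianReal 0 v with hμ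
  have hgt : gaussTorus N β = μ := rfl
  rw [hgt]
  have e1 : (fun ω => AgenTorus N m (fun w => MvPolynomial.eval w f) ω * MvPolynomial.eval ω g)
      = fun ω => MvPolynomial.eval ω (Apoly N m f * g) := by
    funext ω; rw [Agen_eq, ← map_mul]
  have e2 : (fun ω => MvPolynomial.eval ω f * AgenTorus N m (fun w => MvPolynomial.eval w g) ω)
      = fun ω => MvPolynomial.eval ω (f * Apoly N m g) := by
    funext ω; rw [Agen_eq, ← map_mul]
  rw [e1, e2]
  refine eq_neg_of_add_eq_zero_left ?_
  rw [← integral_add (integrable_mveval hv _) (integrable_mveval hv _)]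
  have e3 : (fun ω => MvPolynomial.eval ω (Apoly N m f * g)
      + MvPolynomial.eval ω (f * Apoly N m g))
      = fun ω => ∑ x : ZMod N, MvPolynomial.eval ω (cpoly N m x
          * MvPolynomial.pderiv x (f * g)) := by
    funext ω
    rw [← map_add, ← map_sum]
    congr 1
    unfold Apoly
    rw [Finset.sum_mul, Finset.mul_sum, ← Finset.sum_add_distrib]
    refine Finset.sum_congr rfl fun x _ => ?_
    rw [MvPolynomial.pderiv_mul]
    ring
  rw [e3, integral_finset_sum _ fun x _ => integrable_mveval hv _]
  set h : MvPolynomial (ZMod N) ℝ := f * g with hh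
  by_cases h2 : (2 : ZMod N) = 0
  · refine Finset.sum_eq_zero fun x _ => ?_
    have hm1 : (x - 1 : ZMod N) = x + 1 := by linear_combination -h2
    have hc : cpoly N m x = 0 := by
      unfold cpoly
      rw [hm1, mul_comm (m (x + 1)) (m x), sub_self]
    rw [hc, zero_mul]
    simp
  · -- N ≥ 3 case
    have h1 : (1 : ZMod N) ≠ 0 := by
      intro h1
      exact h2 (by linear_combination 2 * h1)
    have key : ∀ (y x : ZMod N), y ≠ x →
        ∫ ω, MvPolynomial.eval ω (MvPolynomial.X y * MvPolynomial.pderiv x h) ∂μ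
          = (v : ℝ)⁻¹ * ∫ ω, MvPolynomial.eval ω
              (MvPolynomial.X x * (MvPolynomial.X y * h)) ∂μ := by
      intro y x hyx
      have hpd : MvPolynomial.pderiv x (MvPolynomial.X y * h)
          = MvPolynomial.X y * MvPolynomial.pderiv x h := by
        rw [MvPolynomial.pderiv_mul, MvPolynomial.pderiv_X_of_ne hyx, zero_mul, zero_add]
      rw [← hpd]
      exact mv_ibp hv _ x
    set S : ZMod N → ZMod N → ℝ := fun x y =>
      ∫ ω, MvPolynomial.eval ω (MvPolynomial.X x * (MvPolynomial.X y * h)) ∂μ with hS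
    set a : ZMod N → ℝ := fun x => (Real.sqrt (m x * m (x + 1)))⁻¹ with ha
    have hterm : ∀ x : ZMod N,
        ∫ ω, MvPolynomial.eval ω (cpoly N m x * MvPolynomial.pderiv x h) ∂μ
          = a x * ((v : ℝ)⁻¹ * S x (x + 1)) - a (x - 1) * ((v : ℝ)⁻¹ * S x (x - 1)) := by
      intro x
      have hx1 : (x + 1 : ZMod N) ≠ x := by
        intro hx; exact h1 (by linear_combination hx)
      have hx2 : (x - 1 : ZMod N) ≠ x := by
        intro hx; exact h1 (by linear_combination -hx)
      have hsplit : cpoly N m x * MvPolynomial.pderiv x h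
          = MvPolynomial.C (a x) * (MvPolynomial.X (x + 1) * MvPolynomial.pderiv x h)
            - MvPolynomial.C (a (x - 1)) * (MvPolynomial.X (x - 1) * MvPolynomial.pderiv x h) := by
        unfold cpoly
        rw [ha]
        ring
      have e4 : (fun ω => MvPolynomial.eval ω (cpoly N m x * MvPolynomial.pderiv x h))
          = fun ω => a x * MvPolynomial.eval ω (MvPolynomial.X (x + 1) * MvPolynomial.pderiv x h)
            - a (x - 1) * MvPolynomial.eval ω
                (MvPolynomial.X (x - 1) * MvPolynomial.pderiv x h) := by
        funext ω
        rw [hsplit]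
        simp
      rw [e4, integral_sub ((integrable_mveval hv _).const_mul _)
        ((integrable_mveval hv _).const_mul _), integral_const_mul, integral_const_mul,
        key _ x hx1, key _ x hx2]
    rw [Finset.sum_congr rfl fun x _ => hterm x, Finset.sum_sub_distrib]
    have hre : ∑ x : ZMod N, a x * ((v : ℝ)⁻¹ * S x (x + 1))
        = ∑ x : ZMod N, a (x - 1) * ((v : ℝ)⁻¹ * S x (x - 1)) := by
      refine Fintype.sum_equiv (Equiv.addRight (1 : ZMod N)) _ _ fun y => ?_
      simp only [Equiv.coe_addRight, add_sub_cancel_right]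
      have hSsymm : S y (y + 1) = S (y + 1) y := by
        simp only [hS]
        refine integral_congr_ae (Filter.Eventually.of_forall fun ω => ?_)
        exact congrArg _ (by ring)
      rw [hSsymm]
    rw [hre, sub_self]

end
end
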